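/- For all words u, t over a nonempty finite alphabet A and every letter a: (R1) r(u,t) = min{r(u,a) | a a letter occurring in t} (with the convention that the minimum over the empty set is ∞, so r(u,ε) = ∞); (R2) if a does not occur in u then r(u,a) = 0; (R3) if u = u'·a·u'' with a not occurring in u'', then r(u,a) = 1 + r(u', a·u''). -/

import Mathlib

/-- Simon's congruence of order `k`: `u` and `v` have the same subwords
(subsequences) of length at most `k`. -/
def SimonCong {A : Type*} (k : ℕ) (u v : List A) : Prop :=
  ∀ s : List A, s.length ≤ k → (s.Sublist u ↔ s.Sublist v)

/-- The subword distance `δ(u,v) = sup {k | u ∼ₖ v} ∈ ℕ ∪ {∞}`. -/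
noncomputable def delta {A : Type*} (u v : List A) : ℕ∞ :=
  ⨆ k ∈ {k : ℕ | SimonCong k u v}, (k : ℕ∞)

/-- Right side distance `r(u,t) = δ(u, u·t)`. -/
noncomputable def sideR {A : Type*} (u t : List A) : ℕ∞ :=
  delta u (u ++ t)

/-- Left side distance `ℓ(t,u) = δ(t·u, u)`. -/
noncomputable def sideL {A : Type*} (t u : List A) : ℕ∞ :=
  delta (t ++ u) u

/-- The piecewise complexity `h(u)`: the least `n` such that every word
`v` with `u ∼ₙ v` equals `u`. -/
noncomputable def pieceH {A : Type*} (u : List A) : ℕ :=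
  sInf {n : ℕ | ∀ v : List A, SimonCong n u v → v = u}

/-- A word `u` is `m`-reduced if no strict subword of `u` is `∼ₘ`-equivalent to `u`. -/
def MReduced {A : Type*} (m : ℕ) (u : List A) : Prop :=
  ∀ u' : List A, u'.Sublist u → u' ≠ u → ¬ SimonCong m u' u

/-- The piecewise minimality index `ρ(u)`: the least `m` such that `u` is `m`-reduced. -/
noncomputable def rho {A : Type*} (u : List A) : ℕ :=
  sInf {m : ℕ | MReduced m u}

section Aux
variable {A : Type*}

lemma simonCong_zero (u v : List A) : SimonCong 0 u v := by
  intro s hs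
  have : s = [] := List.eq_nil_of_length_eq_zero (Nat.le_zero.mp hs)
  subst this; simp

lemma simonCong_mono {j k : ℕ} (h : j ≤ k) {u v : List A} (hc : SimonCong k u v) :
    SimonCong j u v := fun s hs => hc s (hs.trans h)

lemma le_delta_iff (u v : List A) (n : ℕ) :
    (n : ℕ∞) ≤ delta u v ↔ SimonCong n u v := by
  constructor
  · intro h
    by_contra hn
    have hn1 : 1 ≤ n := by
      rcases Nat.eq_zero_or_pos n with h0 | h0
      · exact absurd (h0 ▸ simonCong_zero u v) hn
      · exact h0
    have hub : delta u v ≤ ((n - 1 : ℕ) : ℕ∞) := by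
      refine iSup₂_le fun k hk => ?_
      have hkn : k ≤ n - 1 := by
        by_contra hkn
        exact hn (simonCong_mono (by omega) hk)
      exact_mod_cast hkn
    have := h.trans hub
    have : n ≤ n - 1 := by exact_mod_cast this
    omega
  · intro h
    exact le_biSup (fun k : ℕ => (k : ℕ∞)) h

lemma enat_eq_of_forall {x y : ℕ∞} (h : ∀ n : ℕ, (n : ℕ∞) ≤ x ↔ (n : ℕ∞) ≤ y) :
    x = y := by
  have aux : ∀ x y : ℕ∞, (∀ n : ℕ, (n : ℕ∞) ≤ x → (n : ℕ∞) ≤ y) → x ≤ y := by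
    intro x y h
    induction x using ENat.recTopCoe with
    | top =>
      induction y using ENat.recTopCoe with
      | top => exact le_rfl
      | coe m =>
        have := h (m + 1) le_top
        exfalso
        have : m + 1 ≤ m := by exact_mod_cast this
        omega
    | coe n => exact h n le_rfl
  exact le_antisymm (aux x y fun n => (h n).mp) (aux y x fun n => (h n).mpr)

lemma cong_append_iff (k : ℕ) (u t : List A) :
    SimonCong k u (u ++ t) ↔
      ∀ s : List A, s.length ≤ k → s.Sublist (u ++ t) → s.Sublist u := by
  constructor
  · intro h s hs hsub
    exact (h s hs).mpr hsub
  · intro h s hs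
    exact ⟨fun hsub => hsub.trans (List.sublist_append_left u t), h s hs⟩

/-- head version of the matching lemma -/
lemma cons_sublist_of_not_mem {a : A} :
    ∀ (q p r : List A), a ∉ q → (a :: p).Sublist (q ++ a :: r) → p.Sublist r := by
  intro q
  induction q with
  | nil =>
    intro p r _ h
    simpa using (List.cons_sublist_cons.mp h)
  | cons d q' ih =>
    intro p r hq h
    rcases List.sublist_cons_iff.mp h with h' | ⟨rr, heq, _⟩
    · exact ih p r (fun hm => hq (List.mem_cons_of_mem _ hm)) h'
    · exfalso
      exact hq (by simp [← (List.cons_eq_cons.mp heq).1])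

lemma append_singleton_sublist {s x y : List A} {a : A} (ha : a ∉ y)
    (h : (s ++ [a]).Sublist (x ++ a :: y)) : s.Sublist x := by
  have h' : (a :: s.reverse).Sublist (y.reverse ++ a :: x.reverse) := by
    have := List.reverse_sublist.mpr h
    simpa [List.reverse_append] using this
  have := cons_sublist_of_not_mem y.reverse s.reverse x.reverse (by simpa using ha) h'
  simpa using List.reverse_sublist.mpr (by simpa using this)

lemma cong_letters (k : ℕ) (u t : List A) :
    SimonCong k u (u ++ t) ↔ ∀ b ∈ t, SimonCong k u (u ++ [b]) := by
  rw [cong_append_iff]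
  constructor
  · intro h b hb
    rw [cong_append_iff]
    intro s hs hsub
    have hbt : List.Sublist [b] t := List.singleton_sublist.mpr hb
    exact h s hs (hsub.trans ((List.Sublist.refl u).append hbt))
  · intro H
    have H' : ∀ b ∈ t, ∀ s : List A, s.length ≤ k → s.Sublist (u ++ [b]) → s.Sublist u := by
      intro b hb
      exact (cong_append_iff k u [b]).mp (H b hb)
    clear H
    induction t using List.reverseRecOn with
    | nil => intro s _ h; simpa using h
    | append_singleton t₀ c ih =>
      intro s hs hsub
      have hsub' : s.Sublist ((u ++ t₀) ++ [c]) := by simpa [List.append_assoc] using hsub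
      rcases List.sublist_append_iff.mp hsub' with ⟨l1, l2, heq, h1, h2⟩
      rcases List.sublist_singleton.mp h2 with rfl | rfl
      · have hse : s = l1 := by simpa using heq
        subst hse
        exact ih (fun b hb => H' b (by simp [hb])) s hs h1
      · have hl1 : l1.Sublist u := by
          refine ih (fun b hb => H' b (by simp [hb])) l1 ?_ h1
          have : l1.length ≤ s.length := by rw [heq]; simp
          omega
        have : s.Sublist (u ++ [c]) := heq ▸ (hl1.append (List.Sublist.refl [c]))
        exact H' c (by simp) s hs this

lemma cong_succ (k : ℕ) (u' u'' : List A) (a : A) (ha : a ∉ u'') :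
    SimonCong (k + 1) (u' ++ a :: u'') ((u' ++ a :: u'') ++ [a]) ↔
      SimonCong k u' (u' ++ a :: u'') := by
  rw [cong_append_iff, cong_append_iff]
  constructor
  · intro h s hs hsub
    have h1 : (s ++ [a]).Sublist ((u' ++ a :: u'') ++ [a]) :=
      hsub.append (List.Sublist.refl [a])
    have h2 : (s ++ [a]).Sublist (u' ++ a :: u'') := by
      refine h (s ++ [a]) ?_ h1
      simp; omega
    exact append_singleton_sublist ha h2
  · intro h s hs hsub
    rcases List.sublist_append_iff.mp hsub with ⟨l1, l2, heq, h1, h2⟩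
    rcases List.sublist_singleton.mp h2 with rfl | rfl
    · rw [heq, List.append_nil]; exact h1
    · have hlen : l1.length ≤ k := by
        have : s.length = l1.length + 1 := by rw [heq]; simp
        omega
      have hl1 : l1.Sublist u' := h l1 hlen h1
      rw [heq]
      refine hl1.append ?_
      exact (List.singleton_sublist.mpr (List.mem_cons_self (a := a) (l := u'')))

end Aux

theorem stmt4 {A : Type*} [Fintype A] [Nonempty A] (u t : List A) (a : A) :
    (sideR u t = ⨅ b ∈ {b : A | b ∈ t}, sideR u [b]) ∧
    (a ∉ u → sideR u [a] = 0) ∧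
    (∀ u' u'' : List A, u = u' ++ a :: u'' → a ∉ u'' →
      sideR u [a] = 1 + sideR u' (a :: u'')) := by
  refine ⟨?_, ?_, ?_⟩
  · apply enat_eq_of_forall
    intro n
    rw [sideR, le_delta_iff, le_iInf₂_iff, cong_letters]
    constructor
    · intro h b hb
      rw [sideR, le_delta_iff]
      exact h b (by simpa using hb)
    · intro h b hb
      have := h b (by simpa using hb)
      rwa [sideR, le_delta_iff] at this
  · intro ha
    have h1 : ¬ SimonCong 1 u (u ++ [a]) := by
      intro h
      have : List.Sublist [a] u := (h [a] (by simp)).mpr (List.sublist_append_right u [a])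
      exact ha (this.subset (by simp))
    have : ¬ (1 : ℕ∞) ≤ sideR u [a] := by
      rw [sideR]
      intro hle
      exact h1 ((le_delta_iff u (u ++ [a]) 1).mp (by exact_mod_cast hle))
    rw [ENat.one_le_iff_ne_zero] at this
    simpa using this
  · intro u' u'' hu ha
    subst hu
    apply enat_eq_of_forall
    intro n
    cases n with
    | zero => simp
    | succ m =>
      rw [sideR, le_delta_iff, cong_succ m u' u'' a ha]
      rw [show ((m + 1 : ℕ) : ℕ∞) = (m : ℕ∞) + 1 by push_cast; ring,
        show (1 : ℕ∞) + sideR u' (a :: u'') = sideR u' (a :: u'') + 1 by ring]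
      rw [ENat.add_le_add_iff_right (by simp)]
      rw [sideR, le_delta_iff]
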